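/- Let n ≥ 2 and let A be a real symmetric n×n matrix with trace(A) = 0. Then |trace(A³)| ≤ ((n-2)/√(n(n-1))) · ‖A‖³, where ‖A‖ = √(trace(A²)) denotes the Frobenius norm of A. In particular, for n = 2 every trace-free real symmetric 2×2 matrix A satisfies trace(A³) = 0. -/

import Mathlib

open Finset in
lemma okumura_scalar (n : ℕ) (hn : 2 ≤ n) (l : Fin n → ℝ) (h0 : ∑ i, l i = 0) :
    ∑ i, (l i) ^ 3 ≤
      (((n : ℝ) - 2) / Real.sqrt ((n : ℝ) * ((n : ℝ) - 1))) *
        (Real.sqrt (∑ i, (l i) ^ 2)) ^ 3 := by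
  have hn1 : (1 : ℝ) ≤ (n : ℝ) := by exact_mod_cast Nat.one_le_of_lt hn
  have hn2 : (2 : ℝ) ≤ (n : ℝ) := by exact_mod_cast hn
  set s : ℝ := ∑ i, (l i) ^ 2 with hs
  have hs0 : 0 ≤ s := Finset.sum_nonneg fun i _ => sq_nonneg _
  have hnn : (0 : ℝ) < (n : ℝ) * ((n : ℝ) - 1) := by nlinarith
  set t : ℝ := Real.sqrt (s / ((n : ℝ) * ((n : ℝ) - 1))) with ht
  have ht0 : 0 ≤ t := Real.sqrt_nonneg _
  have ht2 : t ^ 2 = s / ((n : ℝ) * ((n : ℝ) - 1)) := by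
    rw [ht, Real.sq_sqrt (by positivity)]
  set M : ℝ := ((n : ℝ) - 1) * t with hM
  -- each l i ≤ M
  have hle : ∀ i, l i ≤ M := by
    intro i
    have hCS : (∑ j ∈ univ.erase i, l j) ^ 2 ≤ ((n : ℝ) - 1) * ∑ j ∈ univ.erase i, (l j) ^ 2 := by
      have := sq_sum_le_card_mul_sum_sq (s := univ.erase i) (f := l)
      have hcard : (univ.erase i).card = n - 1 := by
        rw [Finset.card_erase_of_mem (mem_univ i), Finset.card_univ, Fintype.card_fin]
      rw [hcard] at this
      have : (∑ j ∈ univ.erase i, l j) ^ 2 ≤ ((n - 1 : ℕ) : ℝ) * ∑ j ∈ univ.erase i, (l j) ^ 2 := by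
        exact_mod_cast this
      have hcast : ((n - 1 : ℕ) : ℝ) = (n : ℝ) - 1 := by
        have : 1 ≤ n := Nat.one_le_of_lt hn
        push_cast [this]; ring
      rwa [hcast] at this
    have he1 : ∑ j ∈ univ.erase i, l j = - l i := by
      have := Finset.add_sum_erase univ l (mem_univ i)
      linarith [h0, this]
    have he2 : ∑ j ∈ univ.erase i, (l j) ^ 2 = s - (l i) ^ 2 := by
      have h := Finset.add_sum_erase univ (fun j => (l j) ^ 2) (mem_univ i)
      linarith
    rw [he1, he2] at hCS
    -- n * (l i)^2 ≤ (n-1) * s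
    have hsq : (n : ℝ) * (l i) ^ 2 ≤ ((n : ℝ) - 1) * s := by nlinarith
    -- M^2 = (n-1)^2 t^2 = (n-1) s / n
    have hM2 : (n : ℝ) * M ^ 2 = ((n : ℝ) - 1) * s := by
      rw [hM]; rw [mul_pow, ht2]; field_simp
    have hMpos : 0 ≤ M := mul_nonneg (by linarith) ht0
    have hl2 : (l i) ^ 2 ≤ M ^ 2 := by nlinarith
    nlinarith [hl2, hMpos, sq_nonneg (l i + M), sq_nonneg (l i - M)]
  -- tangent cubic
  have hpt : ∀ i, (l i) ^ 3 ≤ (M - 2 * t) * (l i) ^ 2 + (2 * M * t - t ^ 2) * (l i) + M * t ^ 2 := by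
    intro i
    nlinarith [sq_nonneg (l i + t), hle i]
  have hsum : ∑ i, (l i) ^ 3 ≤ (M - 2 * t) * s + (n : ℝ) * (M * t ^ 2) := by
    calc ∑ i, (l i) ^ 3
        ≤ ∑ i, ((M - 2 * t) * (l i) ^ 2 + (2 * M * t - t ^ 2) * (l i) + M * t ^ 2) :=
          Finset.sum_le_sum fun i _ => hpt i
      _ = (M - 2 * t) * s + (2 * M * t - t ^ 2) * (∑ i, l i) + (n : ℝ) * (M * t ^ 2) := by
          rw [Finset.sum_add_distrib, Finset.sum_add_distrib, ← Finset.mul_sum, ← Finset.mul_sum,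
            Finset.sum_const, Finset.card_univ, Fintype.card_fin, nsmul_eq_mul]
      _ = (M - 2 * t) * s + (n : ℝ) * (M * t ^ 2) := by rw [h0]; ring
  -- simplify RHS
  have hRHS : (M - 2 * t) * s + (n : ℝ) * (M * t ^ 2) = ((n : ℝ) - 2) * t * s := by
    have hne : (n : ℝ) - 1 ≠ 0 := by linarith
    rw [hM, ht2]; field_simp; ring
  rw [hRHS] at hsum
  have hfinal : ((n : ℝ) - 2) * t * s =
      (((n : ℝ) - 2) / Real.sqrt ((n : ℝ) * ((n : ℝ) - 1))) * (Real.sqrt s) ^ 3 := by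
    have h1 : t = Real.sqrt s / Real.sqrt ((n : ℝ) * ((n : ℝ) - 1)) := by
      rw [ht, Real.sqrt_div hs0]
    have h2 : (Real.sqrt s) ^ 3 = s * Real.sqrt s := by
      rw [pow_succ, Real.sq_sqrt hs0]
    rw [h1, h2]; ring
  linarith

open Matrix in
lemma trace_pows {n : ℕ} {A : Matrix (Fin n) (Fin n) ℝ} (hA : A.IsHermitian) :
    Matrix.trace A = ∑ i, hA.eigenvalues i ∧
    Matrix.trace (A * A) = ∑ i, (hA.eigenvalues i) ^ 2 ∧
    Matrix.trace (A * A * A) = ∑ i, (hA.eigenvalues i) ^ 3 := by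
  classical
  set U : Matrix (Fin n) (Fin n) ℝ := (hA.eigenvectorUnitary : Matrix (Fin n) (Fin n) ℝ) with hUdef
  set D : Matrix (Fin n) (Fin n) ℝ := Matrix.diagonal (RCLike.ofReal ∘ hA.eigenvalues) with hDdef
  have hsp : A = U * D * star U := hA.spectral_theorem
  have hU : star U * U = 1 := Unitary.coe_star_mul_self hA.eigenvectorUnitary
  have key : ∀ X Y : Matrix (Fin n) (Fin n) ℝ,
      (U * X * star U) * (U * Y * star U) = U * (X * Y) * star U := by
    intro X Y
    have h : star U * (U * (Y * star U)) = Y * star U := by rw [← mul_assoc, hU, one_mul]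
    simp only [mul_assoc, h]
  have tr : ∀ X : Matrix (Fin n) (Fin n) ℝ,
      Matrix.trace (U * X * star U) = Matrix.trace X := by
    intro X
    rw [Matrix.trace_mul_cycle, hU, one_mul]
  have hDi : ∀ i, (RCLike.ofReal ∘ hA.eigenvalues) i = hA.eigenvalues i := by
    intro i; simp
  refine ⟨?_, ?_, ?_⟩
  · conv_lhs => rw [hsp]
    rw [tr, hDdef, Matrix.trace_diagonal]
    simp
  · have h2 : A * A = U * (D * D) * star U := by
      conv_lhs => rw [hsp]
      rw [key]
    rw [h2, tr, hDdef, Matrix.diagonal_mul_diagonal, Matrix.trace_diagonal]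
    refine Finset.sum_congr rfl fun i _ => ?_
    simp [sq]
  · have h2 : A * A = U * (D * D) * star U := by
      conv_lhs => rw [hsp]
      rw [key]
    have h3 : A * A * A = U * (D * D * D) * star U := by
      conv_lhs => rw [h2, hsp]
      rw [key]
    rw [h3, tr, hDdef, Matrix.diagonal_mul_diagonal, Matrix.diagonal_mul_diagonal,
      Matrix.trace_diagonal]
    refine Finset.sum_congr rfl fun i _ => ?_
    simp [pow_succ]

lemma isSymm_isHermitian {n : ℕ} (A : Matrix (Fin n) (Fin n) ℝ) (hS : A.IsSymm) :
    A.IsHermitian := by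
  rw [Matrix.IsHermitian]
  ext i j
  rw [Matrix.conjTranspose_apply, star_trivial]
  exact congrFun (congrFun hS j) i |>.symm ▸ rfl


theorem okumura_main (n : ℕ) (hn : 2 ≤ n) (A : Matrix (Fin n) (Fin n) ℝ)
    (hS : A.IsSymm) (h0 : A.trace = 0) :
    |Matrix.trace (A * A * A)| ≤
      (((n : ℝ) - 2) / Real.sqrt ((n : ℝ) * ((n : ℝ) - 1))) *
        (Real.sqrt (Matrix.trace (A * A))) ^ 3 := by
  have hH : A.IsHermitian := isSymm_isHermitian A hS
  obtain ⟨e1, e2, e3⟩ := trace_pows hH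
  set l := hH.eigenvalues with hl
  have h0' : ∑ i, l i = 0 := by rw [← e1]; exact h0
  have b1 := okumura_scalar n hn l h0'
  have h0'' : ∑ i, (fun i => - l i) i = 0 := by
    simp only []
    rw [Finset.sum_neg_distrib, h0', neg_zero]
  have b2 := okumura_scalar n hn (fun i => - l i) h0''
  have hneg3 : ∑ i, ((fun i => - l i) i) ^ 3 = - ∑ i, (l i) ^ 3 := by
    rw [← Finset.sum_neg_distrib]
    exact Finset.sum_congr rfl fun i _ => by ring
  have hneg2 : ∑ i, ((fun i => - l i) i) ^ 2 = ∑ i, (l i) ^ 2 := by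
    simp
  rw [hneg3, hneg2] at b2
  rw [e3, e2]
  exact abs_le.mpr ⟨by linarith, b1⟩

/-- Two-sided Okumura inequality: for a trace-free real symmetric `n × n` matrix `A` (`n ≥ 2`),
`|trace(A³)| ≤ ((n-2)/√(n(n-1))) · ‖A‖³` with `‖A‖ = √(trace(A²))` the Frobenius norm.
In particular, for `n = 2` every trace-free real symmetric `2 × 2` matrix has `trace(A³) = 0`. -/
theorem okumura_abs_inequality :
    (∀ (n : ℕ), 2 ≤ n → ∀ A : Matrix (Fin n) (Fin n) ℝ, A.IsSymm → A.trace = 0 →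
      |Matrix.trace (A * A * A)| ≤
        (((n : ℝ) - 2) / Real.sqrt ((n : ℝ) * ((n : ℝ) - 1))) *
          (Real.sqrt (Matrix.trace (A * A))) ^ 3) ∧
    (∀ A : Matrix (Fin 2) (Fin 2) ℝ, A.IsSymm → A.trace = 0 →
      Matrix.trace (A * A * A) = 0) := by
  constructor
  · exact okumura_main
  · intro A hS h0
    have h := okumura_main 2 le_rfl A hS h0
    have h2 : (((2 : ℕ) : ℝ) - 2) = 0 := by norm_num
    rw [h2, zero_div, zero_mul] at h
    exact abs_eq_zero.mp (le_antisymm h (abs_nonneg _))
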